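/- Let H be a finite vertex-transitive digraph, G a finite digraph, and suppose there exists a homomorphism from G to H. Then for every finite digraph K, |G| · N(H,K) ≤ |H| · N(G,K), where |G| denotes the number of vertices of G. -/

import Mathlib

/-- `Nhom L K` is the maximum number of vertices of an induced subdigraph `L'` of `L`
(given by a subset `S` of the vertices of `L` with the restricted adjacency) such that
there exists a homomorphism from `L'` to `K`. -/
noncomputable def Nhom {VL VK : Type*} (L : VL → VL → Prop) (K : VK → VK → Prop) : ℕ :=
  sSup {n | ∃ S : Set VL,
    (∃ f : S → VK, ∀ x y : S, L x.val y.val → K (f x) (f y)) ∧ Nat.card S = n}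

section aux

variable {VL VK : Type*} (L : VL → VL → Prop) (K : VK → VK → Prop)

lemma Nhom_bddAbove [Fintype VL] :
    BddAbove {n | ∃ S : Set VL,
      (∃ f : S → VK, ∀ x y : S, L x.val y.val → K (f x) (f y)) ∧ Nat.card S = n} := by
  refine ⟨Fintype.card VL, fun n hn => ?_⟩
  obtain ⟨S, _, rfl⟩ := hn
  have : Nat.card S ≤ Nat.card VL :=
    Nat.card_le_card_of_injective _ Subtype.val_injective
  simpa [Nat.card_eq_fintype_card] using this

lemma le_Nhom [Fintype VL] (S : Set VL) (f : S → VK)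
    (hf : ∀ x y : S, L x.val y.val → K (f x) (f y)) : Nat.card S ≤ Nhom L K :=
  le_csSup (Nhom_bddAbove L K) ⟨S, ⟨f, hf⟩, rfl⟩

lemma exists_Nhom [Fintype VL] : ∃ S : Set VL,
    (∃ f : S → VK, ∀ x y : S, L x.val y.val → K (f x) (f y)) ∧ Nat.card S = Nhom L K := by
  have hne : {n | ∃ S : Set VL,
      (∃ f : S → VK, ∀ x y : S, L x.val y.val → K (f x) (f y)) ∧ Nat.card S = n}.Nonempty := by
    refine ⟨0, ∅, ⟨fun x => (Set.notMem_empty _ x.2).elim,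
      fun x y _ => (Set.notMem_empty _ x.2).elim⟩, by simp⟩
  exact Nat.sSup_mem hne (Nhom_bddAbove L K)

end aux

/-- Let `H` be a finite vertex-transitive digraph, `G` a finite digraph admitting a
homomorphism to `H`.  Then for every finite digraph `K`,
`|G| · N(H,K) ≤ |H| · N(G,K)`.  (Hell–Nešetřil, Proposition 1.22, for digraphs.) -/
theorem card_mul_Nhom_le_of_hom (VG VH : Type) [Fintype VG] [Fintype VH]
    (G : VG → VG → Prop) (H : VH → VH → Prop)
    (hvt : ∀ u v : VH, ∃ φ : VH ≃ VH, (∀ x y : VH, H x y ↔ H (φ x) (φ y)) ∧ φ u = v)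
    (hhom : ∃ f : VG → VH, ∀ x y : VG, G x y → H (f x) (f y))
    (VK : Type) [Fintype VK] (K : VK → VK → Prop) :
    Fintype.card VG * Nhom H K ≤ Fintype.card VH * Nhom G K := by
  classical
  obtain ⟨f, hf⟩ := hhom
  rcases isEmpty_or_nonempty VH with hE | hNE
  · haveI : IsEmpty VG := ⟨fun x => hE.false (f x)⟩
    simp
  obtain ⟨S, ⟨g, hg⟩, hScard⟩ := exists_Nhom H (K := K)
  -- The automorphisms of H
  set A := {φ : VH ≃ VH // ∀ x y : VH, H x y ↔ H (φ x) (φ y)} with hA_def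
  haveI : Fintype A := Fintype.ofFinite A
  set c : VH → VH → ℕ := fun w u => (Finset.univ.filter (fun a : A => a.1 w = u)).card with hc_def
  -- all fibers over the same w have equal cardinality
  have hc_const : ∀ w u v : VH, c w u = c w v := by
    intro w u v
    obtain ⟨ψ, hψ, hψuv⟩ := hvt u v
    have hψ' : ∀ x y : VH, H x y ↔ H (ψ.symm x) (ψ.symm y) := by
      intro x y
      have := hψ (ψ.symm x) (ψ.symm y)
      simpa using this.symm
    refine Finset.card_nbij' (fun a => ⟨a.1.trans ψ, fun x y => (a.2 x y).trans (hψ _ _)⟩)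
      (fun b => ⟨b.1.trans ψ.symm, fun x y => (b.2 x y).trans (hψ' _ _)⟩) ?_ ?_ ?_ ?_
    · intro a ha
      simp only [Finset.mem_coe, Finset.mem_filter, Finset.mem_univ, true_and] at ha ⊢
      simp [Equiv.trans_apply, ha, hψuv]
    · intro b hb
      simp only [Finset.mem_coe, Finset.mem_filter, Finset.mem_univ, true_and] at hb ⊢
      simp [Equiv.trans_apply, hb, ← hψuv]
    · intro a _; ext x; simp
    · intro b _; ext x; simp
  -- summing fibers gives the number of automorphisms
  have hsum : ∀ w : VH, ∑ u : VH, c w u = Fintype.card A := by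
    intro w
    rw [Fintype.card]
    exact (Finset.card_eq_sum_card_fiberwise
      (f := fun a : A => a.1 w) (t := Finset.univ) (fun a _ => Finset.mem_univ _)).symm
  obtain ⟨w₀⟩ := hNE
  set d := c w₀ w₀ with hd_def
  have hconst : ∀ w u : VH, c w u = d := by
    intro w u
    have h1 : Fintype.card VH * c w u = Fintype.card A := by
      rw [← hsum w]
      rw [Finset.sum_congr rfl (fun v _ => hc_const w v u)]
      simp [Finset.sum_const, mul_comm]
    have h2 : Fintype.card VH * d = Fintype.card A := by
      rw [← hsum w₀]
      rw [Finset.sum_congr rfl (fun v _ => hc_const w₀ v w₀)]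
      simp [Finset.sum_const, mul_comm, hd_def]
    exact Nat.eq_of_mul_eq_mul_left (Fintype.card_pos_iff.mpr ⟨w₀⟩) (h1.trans h2.symm)
  have hcardA : Fintype.card A = Fintype.card VH * d := by
    rw [← hsum w₀]
    rw [Finset.sum_congr rfl (fun v _ => hconst w₀ v)]
    simp [Finset.sum_const, mul_comm]
  have hd_pos : 0 < d := by
    rw [hd_def, hc_def]
    refine Finset.card_pos.mpr ⟨⟨Equiv.refl VH, fun x y => Iff.rfl⟩, ?_⟩
    simp
  -- each automorphism yields an induced subgraph of G mapping to K
  have hbound : ∀ a : A,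
      (Finset.univ.filter (fun x : VG => a.1 (f x) ∈ S)).card ≤ Nhom G K := by
    intro a
    set S' : Set VG := {x | a.1 (f x) ∈ S} with hS'_def
    have hle := le_Nhom G K S' (fun x => g ⟨a.1 (f x.val), x.2⟩)
      (fun x y hxy => hg _ _ ((a.2 _ _).mp (hf _ _ hxy)))
    have hcardS' : Nat.card S' = (Finset.univ.filter (fun x : VG => a.1 (f x) ∈ S)).card := by
      rw [Nat.card_eq_fintype_card]
      convert Fintype.card_subtype (fun x : VG => a.1 (f x) ∈ S)
      exact Iff.rfl
    rwa [hcardS'] at hle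
  -- double counting
  have hperx : ∀ w : VH,
      (Finset.univ.filter (fun a : A => a.1 w ∈ S)).card = Nhom H K * d := by
    intro w
    have h1 : (Finset.univ.filter (fun a : A => a.1 w ∈ S)).card
        = ∑ u ∈ S.toFinset, ((Finset.univ.filter (fun a : A => a.1 w ∈ S)).filter
            (fun a => a.1 w = u)).card :=
      Finset.card_eq_sum_card_fiberwise (fun a ha => by
        simp only [Finset.mem_coe, Finset.mem_filter, Finset.mem_univ, true_and] at ha
        simpa using ha)
    rw [h1]
    have h2 : ∀ u ∈ S.toFinset,
        ((Finset.univ.filter (fun a : A => a.1 w ∈ S)).filter (fun a => a.1 w = u)).card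
          = d := by
      intro u hu
      rw [Finset.filter_filter]
      have : (Finset.univ.filter (fun a : A => a.1 w ∈ S ∧ a.1 w = u))
          = Finset.univ.filter (fun a : A => a.1 w = u) := by
        apply Finset.filter_congr
        intro a _
        constructor
        · exact fun h => h.2
        · exact fun h => ⟨h ▸ (Set.mem_toFinset.mp hu), h⟩
      rw [this]
      exact hconst w u
    rw [Finset.sum_congr rfl h2, Finset.sum_const, smul_eq_mul]
    congr 1
    rw [← hScard, Set.toFinset_card, Nat.card_eq_fintype_card]
  have key : ∑ a : A, (Finset.univ.filter (fun x : VG => a.1 (f x) ∈ S)).card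
      = Fintype.card VG * (Nhom H K * d) := by
    calc ∑ a : A, (Finset.univ.filter (fun x : VG => a.1 (f x) ∈ S)).card
        = ∑ a : A, ∑ x : VG, (if a.1 (f x) ∈ S then 1 else 0) := by
          refine Finset.sum_congr rfl fun a _ => ?_
          rw [Finset.card_filter]
      _ = ∑ x : VG, ∑ a : A, (if a.1 (f x) ∈ S then 1 else 0) := Finset.sum_comm
      _ = ∑ x : VG, (Finset.univ.filter (fun a : A => a.1 (f x) ∈ S)).card := by
          refine Finset.sum_congr rfl fun x _ => ?_
          rw [Finset.card_filter]
      _ = ∑ _x : VG, Nhom H K * d := Finset.sum_congr rfl fun x _ => hperx (f x)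
      _ = Fintype.card VG * (Nhom H K * d) := by
          rw [Finset.sum_const, smul_eq_mul, Finset.card_univ]
  have upper : ∑ a : A, (Finset.univ.filter (fun x : VG => a.1 (f x) ∈ S)).card
      ≤ Fintype.card A * Nhom G K := by
    calc ∑ a : A, (Finset.univ.filter (fun x : VG => a.1 (f x) ∈ S)).card
        ≤ ∑ _a : A, Nhom G K := Finset.sum_le_sum fun a _ => hbound a
      _ = Fintype.card A * Nhom G K := by
          rw [Finset.sum_const, smul_eq_mul, Finset.card_univ]
  have final : (Fintype.card VG * Nhom H K) * d ≤ (Fintype.card VH * Nhom G K) * d := by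
    calc (Fintype.card VG * Nhom H K) * d
        = Fintype.card VG * (Nhom H K * d) := by ring
      _ = ∑ a : A, (Finset.univ.filter (fun x : VG => a.1 (f x) ∈ S)).card := key.symm
      _ ≤ Fintype.card A * Nhom G K := upper
      _ = (Fintype.card VH * Nhom G K) * d := by rw [hcardA]; ring
  exact Nat.le_of_mul_le_mul_right final hd_pos
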